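/- Let (N,v) be a simple monotone game with n = |N| and let S ⊆ N with s = |S| ≥ 2. Then the Shapley-Owen coopetition index, defined as the average over all orderings σ of N in which the players of S occupy consecutive positions of the sequential attitude AS(S,σ), satisfies C_SO(S) = Σ_{T⊆N\S} (t!·(n−s−t)!/(n−s+1)!) · Σ_{{Q,S\Q}∈Π₂(S)} (2·q!·(s−q)!/((s−1)·s!)) · BI({Q,S\Q},T), where t = |T| and q = |Q|. -/

import Mathlib

open Finset

variable {α : Type*} [DecidableEq α]

/-- A simple monotone game on the player set `N`: `v` maps coalitions to `{0,1}`,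
`v ∅ = 0`, `v N = 1`, and `v` is monotone on subsets of `N`. -/
structure SimpleGame (N : Finset α) (v : Finset α → ℝ) : Prop where
  empty : v ∅ = 0
  full : v N = 1
  mono : ∀ ⦃S T : Finset α⦄, S ⊆ T → T ⊆ N → v S ≤ v T
  binary : ∀ S ⊆ N, v S = 0 ∨ v S = 1

/-- Block interaction indicator `BI v {S₁,S₂} T = v(S₁∪S₂∪T) − v(S₁∪T) − v(S₂∪T) + v(T)`. -/
noncomputable def BI (v : Finset α → ℝ) (π : Sym2 (Finset α)) (T : Finset α) : ℝ :=
  Sym2.lift ⟨fun A B => v (A ∪ B ∪ T) - v (A ∪ T) - v (B ∪ T) + v T,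
    fun A B => by simp only []; rw [Finset.union_comm A B]; ring⟩ π

/-- `Π₂(S)`: the set of unordered partitions of `S` into two nonempty parts. -/
def Pi2 (S : Finset α) : Finset (Sym2 (Finset α)) :=
  (S.powerset.filter fun Q => Q ≠ ∅ ∧ Q ≠ S).image fun Q => s(Q, S \ Q)

/-- `S` is critical with respect to `T`: `v(S∪T) − v(T) = 1`. -/
def Critical (v : Finset α → ℝ) (S T : Finset α) : Prop := v (S ∪ T) - v T = 1

/-- `S` is essential critical with respect to `T`: `S` is critical wrt `T` and no
proper nonempty subset of `S` is critical wrt `T`. -/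
def EssentialCritical (v : Finset α → ℝ) (S T : Finset α) : Prop :=
  Critical v S T ∧ ∀ S' : Finset α, S' ⊂ S → S'.Nonempty → ¬ Critical v S' T

/-- The attitude `A_p(S,T)` of `S` towards `T` under the distribution `p` on `Π₂(S)`. -/
noncomputable def attitude (v : Finset α → ℝ) (p : Sym2 (Finset α) → ℝ)
    (S T : Finset α) : ℝ :=
  ∑ π ∈ Pi2 S, p π * BI v π T

/-- The coopetition index `C_{p,q}(S)`. -/
noncomputable def coop (N : Finset α) (v : Finset α → ℝ)
    (p : Sym2 (Finset α) → ℝ) (q : Finset α → ℝ) (S : Finset α) : ℝ :=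
  ∑ T ∈ (N \ S).powerset, q T * attitude v p S T

/-- `Σ_S(N)`: orderings of `N` (as lists) in which the elements of `S` occupy
consecutive positions. -/
noncomputable def SigmaOrd (N S : Finset α) : Finset (List α) := by
  classical
  exact N.toList.permutations.toFinset.filter
    fun l => ∃ k ∈ Finset.range (l.length + 1), ((l.drop k).take S.card).toFinset = S

/-- Sequential attitude `AS(S,σ)` of `S` towards the ordering `l`:
the average over `k = 1, …, s−1` of the block interaction between the first `k` and the
last `s−k` elements of the block of `S` in `l`, against the predecessors of `S` in `l`. -/
noncomputable def seqAttitude (v : Finset α → ℝ) (S : Finset α) (l : List α) : ℝ :=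
  (1 / ((S.card : ℝ) - 1)) * ∑ k ∈ Finset.Icc 1 (S.card - 1),
    BI v (s((((l.dropWhile fun x => decide (x ∉ S)).take S.card).take k).toFinset,
            (((l.dropWhile fun x => decide (x ∉ S)).take S.card).drop k).toFinset))
      (l.takeWhile fun x => decide (x ∉ S)).toFinset

/-- Shapley-Owen coopetition index defined through orderings. -/
noncomputable def C_SO_ord (N : Finset α) (v : Finset α → ℝ) (S : Finset α) : ℝ :=
  (1 / ((SigmaOrd N S).card : ℝ)) * ∑ l ∈ SigmaOrd N S, seqAttitude v S l

/-- Shapley-Owen weight on partitions `{Q, S\Q}`: `2·q!·(s−q)!/((s−1)·s!)`. -/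
noncomputable def soWeight (S : Finset α) : Sym2 (Finset α) → ℝ :=
  Sym2.lift ⟨fun A B => (2 * A.card.factorial * B.card.factorial : ℝ) /
      (((S.card : ℝ) - 1) * (S.card.factorial : ℝ)),
    fun A B => by simp only []; ring⟩

/-- Shapley-Owen weight on external coalitions: `t!·(n−s−t)!/(n−s+1)!`. -/
noncomputable def soExt (N S T : Finset α) : ℝ :=
  (T.card.factorial * (N.card - S.card - T.card).factorial : ℝ) /
    ((N.card - S.card + 1).factorial : ℝ)

/-- Shapley-Owen coopetition index (closed formula). -/
noncomputable def C_SO (N : Finset α) (v : Finset α → ℝ) (S : Finset α) : ℝ :=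
  ∑ T ∈ (N \ S).powerset, soExt N S T * ∑ π ∈ Pi2 S, soWeight S π * BI v π T

/-- Banzhaf coopetition index. -/
noncomputable def C_Bz (N : Finset α) (v : Finset α → ℝ) (S : Finset α) : ℝ :=
  (1 / ((2 : ℝ) ^ (N.card - S.card) * ((2 : ℝ) ^ (S.card - 1) - 1))) *
    ∑ T ∈ (N \ S).powerset, ∑ π ∈ Pi2 S, BI v π T

/-- Decisiveness index `D_{p,q}(S)`. -/
noncomputable def decis (N : Finset α) (v : Finset α → ℝ)
    (p : Sym2 (Finset α) → ℝ) (q : Finset α → ℝ) (S : Finset α) : ℝ :=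
  ∑ T ∈ (N \ S).powerset, q T * ∑ π ∈ Pi2 S, p π * |BI v π T|

/-- Banzhaf decisiveness index. -/
noncomputable def D_Bz (N : Finset α) (v : Finset α → ℝ) (S : Finset α) : ℝ :=
  (1 / ((2 : ℝ) ^ (N.card - S.card) * ((2 : ℝ) ^ (S.card - 1) - 1))) *
    ∑ T ∈ (N \ S).powerset, ∑ π ∈ Pi2 S, |BI v π T|

/-- Shapley-Owen decisiveness index. -/
noncomputable def D_SO (N : Finset α) (v : Finset α → ℝ) (S : Finset α) : ℝ :=
  ∑ T ∈ (N \ S).powerset, soExt N S T * ∑ π ∈ Pi2 S, soWeight S π * |BI v π T|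

/-- The apex game on `N` with apex player `a`. -/
noncomputable def apexGame (N : Finset α) (a : α) : Finset α → ℝ :=
  fun S => if (a ∈ S ∧ (S \ {a}).Nonempty) ∨ S = N \ {a} then 1 else 0

section AuxSO
open List

lemma perm_of_nodup_toFinset_eq {l1 l2 : List α} (h1 : l1.Nodup) (h2 : l2.Nodup)
    (h : l1.toFinset = l2.toFinset) : l1 ~ l2 := by
  have h' : (l1.dedup : Multiset α) = l2.dedup := congrArg Finset.val h
  rw [List.dedup_eq_self.mpr h1, List.dedup_eq_self.mpr h2] at h'
  exact Multiset.coe_eq_coe.mp h'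

noncomputable def permsOf (U : Finset α) : Finset (List α) := U.toList.permutations.toFinset

lemma mem_permsOf {U : Finset α} {l : List α} : l ∈ permsOf U ↔ l ~ U.toList := by
  simp [permsOf, List.mem_toFinset, List.mem_permutations]

lemma permsOf_nodup {U : Finset α} {l : List α} (hl : l ∈ permsOf U) : l.Nodup :=
  (mem_permsOf.mp hl).nodup_iff.mpr U.nodup_toList

lemma permsOf_toFinset {U : Finset α} {l : List α} (hl : l ∈ permsOf U) : l.toFinset = U := by
  rw [List.toFinset_eq_of_perm _ _ (mem_permsOf.mp hl), Finset.toList_toFinset]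

lemma permsOf_length {U : Finset α} {l : List α} (hl : l ∈ permsOf U) : l.length = U.card := by
  rw [(mem_permsOf.mp hl).length_eq, Finset.length_toList]

lemma card_permsOf (U : Finset α) : (permsOf U).card = U.card.factorial := by
  rw [permsOf, List.toFinset_card_of_nodup (List.nodup_permutations _ U.nodup_toList),
    List.length_permutations, Finset.length_toList]

lemma toFinset_take_drop {l : List α} (h : l.Nodup) (m : ℕ) :
    (l.drop m).toFinset = l.toFinset \ (l.take m).toFinset := by
  have hd : (l.take m).Disjoint (l.drop m) := by
    have := h
    rw [← List.take_append_drop m l, List.nodup_append'] at this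
    exact this.2.2
  ext x
  simp only [List.mem_toFinset, Finset.mem_sdiff]
  constructor
  · intro hx
    exact ⟨by rw [← List.take_append_drop m l]; exact List.mem_append_right _ hx,
      fun hx' => hd hx' hx⟩
  · rintro ⟨hx, hx'⟩
    rw [← List.take_append_drop m l] at hx
    rcases List.mem_append.mp hx with h' | h'
    · exact absurd h' hx'
    · exact h'

lemma card_permsOf_filter_take (U T : Finset α) (hT : T ⊆ U) :
    ((permsOf U).filter (fun u => (u.take T.card).toFinset = T)).card
      = T.card.factorial * (U \ T).card.factorial := by
  rw [← card_permsOf, ← card_permsOf, ← Finset.card_product]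
  apply Finset.card_nbij' (fun u => (u.take T.card, u.drop T.card)) (fun p => p.1 ++ p.2)
  · intro u hu
    rw [Finset.mem_coe, Finset.mem_filter] at hu
    obtain ⟨hu, hta⟩ := hu
    have hnod := permsOf_nodup hu
    refine Finset.mem_product.mpr ⟨mem_permsOf.mpr ?_, mem_permsOf.mpr ?_⟩
    · exact perm_of_nodup_toFinset_eq ((List.take_sublist _ _).nodup hnod)
        T.nodup_toList (by rw [hta, Finset.toList_toFinset])
    · refine perm_of_nodup_toFinset_eq ((List.drop_sublist _ _).nodup hnod)
        (U \ T).nodup_toList ?_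
      rw [toFinset_take_drop hnod, hta, permsOf_toFinset hu, Finset.toList_toFinset]
  · rintro ⟨a, b⟩ hp
    rw [Finset.mem_coe, Finset.mem_product] at hp
    obtain ⟨ha, hb⟩ := hp
    have halen : a.length = T.card := permsOf_length ha
    refine Finset.mem_filter.mpr ⟨mem_permsOf.mpr ?_, ?_⟩
    · rw [← Multiset.coe_eq_coe]
      show (↑a + ↑b : Multiset α) = _
      rw [show ((a : Multiset α)) = T.val by
          rw [← Finset.coe_toList]; exact Multiset.coe_eq_coe.mpr (mem_permsOf.mp ha),
        show ((b : Multiset α)) = (U \ T).val by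
          rw [← Finset.coe_toList]; exact Multiset.coe_eq_coe.mpr (mem_permsOf.mp hb),
        Finset.sdiff_val, Finset.coe_toList]
      exact add_tsub_cancel_of_le (Finset.val_le_iff.mpr hT)
    · rw [List.take_left' halen, permsOf_toFinset ha]
  · intro u hu
    exact List.take_append_drop _ u
  · rintro ⟨a, b⟩ hp
    rw [Finset.mem_coe, Finset.mem_product] at hp
    have halen : a.length = T.card := permsOf_length hp.1
    dsimp only
    rw [List.take_left' halen, List.drop_left' halen]

lemma sum_permsOf_take (U : Finset α) (m : ℕ) (hm : m ≤ U.card) (g : Finset α → ℝ) :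
    ∑ u ∈ permsOf U, g (u.take m).toFinset
      = ∑ T ∈ Finset.powersetCard m U,
          (m.factorial * (U.card - m).factorial : ℝ) * g T := by
  rw [← Finset.sum_fiberwise_of_maps_to (g := fun u => (u.take m).toFinset)
      (t := Finset.powersetCard m U)
      (fun u hu => by
        rw [Finset.mem_powersetCard]
        constructor
        · rw [← permsOf_toFinset hu]
          intro x hx
          rw [List.mem_toFinset] at hx ⊢
          exact (List.take_sublist _ _).mem hx
        · rw [List.toFinset_card_of_nodup ((List.take_sublist _ _).nodup (permsOf_nodup hu)),
            List.length_take, permsOf_length hu, min_eq_left hm])]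
  refine Finset.sum_congr rfl fun T hT => ?_
  rw [Finset.mem_powersetCard] at hT
  have : ∀ u ∈ (permsOf U).filter (fun u => (u.take m).toFinset = T),
      g (u.take m).toFinset = g T := fun u hu => by
    rw [(Finset.mem_filter.mp hu).2]
  rw [Finset.sum_congr rfl this, Finset.sum_const, ← hT.2,
    card_permsOf_filter_take U T hT.1, nsmul_eq_mul]
  push_cast
  rw [Finset.card_sdiff_of_subset hT.1, hT.2]




lemma mem_sigmaOrd' {N S : Finset α} {l : List α} :
    l ∈ SigmaOrd N S ↔ l ~ N.toList ∧
      ∃ k ∈ Finset.range (l.length + 1), ((l.drop k).take S.card).toFinset = S := by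
  unfold SigmaOrd
  simp [Finset.mem_filter, List.mem_toFinset, List.mem_permutations]

lemma takeWhile_block (S : Finset α) (a w z : List α) (ha : ∀ x ∈ a, x ∉ S)
    (hw : w.toFinset = S) (hne : w ≠ []) :
    (a ++ (w ++ z)).takeWhile (fun x => decide (x ∉ S)) = a := by
  rw [List.takeWhile_append_of_pos (by intro x hx; simpa using ha x hx)]
  cases w with
  | nil => exact absurd rfl hne
  | cons h t =>
    have hh : h ∈ S := by rw [← hw]; simp
    rw [List.cons_append, List.takeWhile_cons_of_neg (by simp [hh]), List.append_nil]

lemma dropWhile_eq_of_takeWhile {p : α → Bool} {l a b : List α}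
    (h : l.takeWhile p = a) (h2 : l = a ++ b) : l.dropWhile p = b := by
  have h3 := List.takeWhile_append_dropWhile (p := p) (l := l)
  rw [h] at h3
  exact List.append_cancel_left (h3.trans h2)

lemma sigmaOrd_structure {N S : Finset α} (hs : 1 ≤ S.card) {l : List α}
    (hl : l ∈ SigmaOrd N S) :
    ∃ k, k + S.card ≤ l.length ∧
      l.takeWhile (fun x => decide (x ∉ S)) = l.take k ∧
      ((l.drop k).take S.card).toFinset = S := by
  obtain ⟨hperm, k, -, hw⟩ := mem_sigmaOrd'.mp hl
  have hnod : l.Nodup := hperm.nodup_iff.mpr N.nodup_toList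
  set w := (l.drop k).take S.card with hwdef
  have hwsub : w <+ l := (List.take_sublist _ _).trans (List.drop_sublist _ _)
  have hwnod : w.Nodup := hwsub.nodup hnod
  have hwlen : w.length = S.card := by
    rw [← hw, List.toFinset_card_of_nodup hwnod]
  have hmin : w.length = min S.card (l.length - k) := by
    simp [hwdef, List.length_take, List.length_drop]
  have hks : k + S.card ≤ l.length := by omega
  have hsplit : l = l.take k ++ (w ++ l.drop (k + S.card)) := by
    conv_lhs => rw [← List.take_append_drop k l]
    congr 1
    conv_lhs => rw [← List.take_append_drop S.card (l.drop k)]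
    rw [List.drop_drop]
  have hdisj : (l.take k).Disjoint (l.drop k) := by
    have h2 := hnod
    rw [← List.take_append_drop k l, List.nodup_append'] at h2
    exact h2.2.2
  have key : ∀ x ∈ l.take k, x ∉ S := by
    intro x hx hxS
    rw [← hw, List.mem_toFinset] at hxS
    exact hdisj hx ((List.take_sublist _ _).mem hxS)
  refine ⟨k, hks, ?_, hw⟩
  have hne : w ≠ [] := by
    intro h
    rw [h] at hwlen
    simp at hwlen
    omega
  have h5 := takeWhile_block S (l.take k) w (l.drop (k + S.card)) key hw hne
  rw [← hsplit] at h5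
  exact h5

lemma coe_permsOf {U : Finset α} {l : List α} (hl : l ∈ permsOf U) :
    ((l : List α) : Multiset α) = U.val := by
  rw [← Finset.coe_toList]
  exact Multiset.coe_eq_coe.mpr (mem_permsOf.mp hl)

lemma fwd_facts (N S : Finset α) (hS : S ⊆ N) (hs : 1 ≤ S.card)
    {m : ℕ} {u w : List α} (hm : m ∈ Finset.range (N.card - S.card + 1))
    (hu : u ∈ permsOf (N \ S)) (hw : w ∈ permsOf S) :
    (u.take m ++ w ++ u.drop m) ∈ SigmaOrd N S ∧
    (u.take m ++ w ++ u.drop m).takeWhile (fun x => decide (x ∉ S)) = u.take m ∧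
    (u.take m ++ w ++ u.drop m).dropWhile (fun x => decide (x ∉ S)) = w ++ u.drop m := by
  have hun : u.Nodup := permsOf_nodup hu
  have hut : u.toFinset = N \ S := permsOf_toFinset hu
  have hul : u.length = (N \ S).card := permsOf_length hu
  have hwt : w.toFinset = S := permsOf_toFinset hw
  have hwl : w.length = S.card := permsOf_length hw
  have hcard : (N \ S).card = N.card - S.card := Finset.card_sdiff_of_subset hS
  have hsn : S.card ≤ N.card := Finset.card_le_card hS
  have hm' : m ≤ u.length := by
    rw [hul, hcard]
    exact Nat.lt_succ_iff.mp (Finset.mem_range.mp hm)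
  have htl : (u.take m).length = m := by rw [List.length_take, min_eq_left hm']
  have hassoc : u.take m ++ w ++ u.drop m = u.take m ++ (w ++ u.drop m) :=
    List.append_assoc _ _ _
  have hne : w ≠ [] := by
    intro h; rw [h] at hwl; simp at hwl; omega
  have hnotS : ∀ x ∈ u.take m, x ∉ S := by
    intro x hx hxS
    have hx2 : x ∈ N \ S := hut ▸ List.mem_toFinset.mpr ((List.take_sublist _ _).mem hx)
    exact (Finset.mem_sdiff.mp hx2).2 hxS
  have htw : (u.take m ++ w ++ u.drop m).takeWhile (fun x => decide (x ∉ S)) = u.take m := by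
    rw [hassoc]; exact takeWhile_block S _ w _ hnotS hwt hne
  have hdw : (u.take m ++ w ++ u.drop m).dropWhile (fun x => decide (x ∉ S)) = w ++ u.drop m :=
    dropWhile_eq_of_takeWhile htw hassoc
  have hperm : (u.take m ++ w ++ u.drop m) ~ N.toList := by
    rw [← Multiset.coe_eq_coe]
    calc ((u.take m ++ w ++ u.drop m : List α) : Multiset α)
        = ↑(u.take m) + ↑w + ↑(u.drop m) := by
          rw [← Multiset.coe_add, ← Multiset.coe_add]
      _ = ↑w + (↑(u.take m) + ↑(u.drop m)) := by
          rw [add_comm (↑(u.take m) : Multiset α) (↑w : Multiset α), add_assoc]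
      _ = ↑w + ↑u := by rw [Multiset.coe_add, List.take_append_drop]
      _ = S.val + (N \ S).val := by rw [coe_permsOf hw, coe_permsOf hu]
      _ = ↑N.toList := by
          rw [Finset.coe_toList, Finset.sdiff_val,
            add_tsub_cancel_of_le (Finset.val_le_iff.mpr hS)]
  have hlen : (u.take m ++ w ++ u.drop m).length = N.card := by
    rw [hperm.length_eq, Finset.length_toList]
  have hdropm : (u.take m ++ w ++ u.drop m).drop m = w ++ u.drop m := by
    rw [hassoc]; exact List.drop_left' htl
  refine ⟨mem_sigmaOrd'.mpr ⟨hperm, m, Finset.mem_range.mpr (by omega), ?_⟩, htw, hdw⟩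
  rw [hdropm, List.take_left' hwl, hwt]

lemma sum_sigmaOrd (N S : Finset α) (hS : S ⊆ N) (hs : 1 ≤ S.card)
    (f : List α → Finset α → ℝ) :
    ∑ l ∈ SigmaOrd N S,
        f ((l.dropWhile fun x => decide (x ∉ S)).take S.card)
          (l.takeWhile fun x => decide (x ∉ S)).toFinset
      = ∑ m ∈ Finset.range (N.card - S.card + 1), ∑ u ∈ permsOf (N \ S), ∑ w ∈ permsOf S,
          f w (u.take m).toFinset := by
  have hsn : S.card ≤ N.card := Finset.card_le_card hS
  rw [show (∑ m ∈ Finset.range (N.card - S.card + 1), ∑ u ∈ permsOf (N \ S), ∑ w ∈ permsOf S,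
          f w (u.take m).toFinset)
      = ∑ e ∈ (Finset.range (N.card - S.card + 1)) ×ˢ ((permsOf (N \ S)) ×ˢ (permsOf S)),
          f e.2.2 (e.2.1.take e.1).toFinset by
    rw [Finset.sum_product]
    exact Finset.sum_congr rfl fun m _ => by rw [Finset.sum_product]]
  apply Finset.sum_nbij'
    (i := fun l =>
      ((l.takeWhile fun x => decide (x ∉ S)).length,
       (l.takeWhile fun x => decide (x ∉ S)) ++
         l.drop ((l.takeWhile fun x => decide (x ∉ S)).length + S.card),
       (l.drop (l.takeWhile fun x => decide (x ∉ S)).length).take S.card))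
    (j := fun e => e.2.1.take e.1 ++ e.2.2 ++ e.2.1.drop e.1)
  -- hi : i maps into product
  · intro l hl
    obtain ⟨k, hks, htw, hwS⟩ := sigmaOrd_structure hs hl
    obtain ⟨hperm, -⟩ := mem_sigmaOrd'.mp hl
    have hnod : l.Nodup := hperm.nodup_iff.mpr N.nodup_toList
    have hlen : l.length = N.card := by rw [hperm.length_eq, Finset.length_toList]
    have hkl : k ≤ l.length := by omega
    have htkl : (l.take k).length = k := by rw [List.length_take, min_eq_left hkl]
    have hplen : (l.takeWhile fun x => decide (x ∉ S)).length = k := by rw [htw, htkl]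
    set w := (l.drop k).take S.card with hwdef
    have hwsub : w <+ l := (List.take_sublist _ _).trans (List.drop_sublist _ _)
    have hwnod : w.Nodup := hwsub.nodup hnod
    have hwlen : w.length = S.card := by rw [← hwS, List.toFinset_card_of_nodup hwnod]
    have hsplit : l = l.take k ++ (w ++ l.drop (k + S.card)) := by
      conv_lhs => rw [← List.take_append_drop k l]
      congr 1
      conv_lhs => rw [← List.take_append_drop S.card (l.drop k)]
      rw [List.drop_drop]
    have hnodsplit := hnod
    rw [hsplit, List.nodup_append', List.nodup_append'] at hnodsplit
    obtain ⟨hnod1, ⟨hnod2, hnod3, hd23⟩, hd1⟩ := hnodsplit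
    refine Finset.mem_product.mpr ⟨Finset.mem_range.mpr (by omega), Finset.mem_product.mpr ⟨?_, ?_⟩⟩
    · -- u-component ∈ permsOf (N \ S)
      rw [hplen]
      refine mem_permsOf.mpr (perm_of_nodup_toFinset_eq ?_ (N \ S).nodup_toList ?_)
      · rw [htw]
        exact List.nodup_append'.mpr ⟨hnod1, hnod3, fun x hx1 hx3 =>
          hd1 hx1 (List.mem_append_right _ hx3)⟩
      · rw [htw, Finset.toList_toFinset]
        have hlt : l.toFinset = N := by
          rw [List.toFinset_eq_of_perm _ _ hperm, Finset.toList_toFinset]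
        ext x
        simp only [List.toFinset_append, Finset.mem_union, List.mem_toFinset, Finset.mem_sdiff]
        constructor
        · rintro (hx | hx)
          · refine ⟨by rw [← hlt, List.mem_toFinset, hsplit]; exact List.mem_append_left _ hx, ?_⟩
            intro hxS
            rw [← hwS, List.mem_toFinset] at hxS
            exact hd1 hx (List.mem_append_left _ hxS)
          · refine ⟨by rw [← hlt, List.mem_toFinset, hsplit]; exact List.mem_append_right _ (List.mem_append_right _ hx), ?_⟩
            intro hxS
            rw [← hwS, List.mem_toFinset] at hxS
            exact hd23 hxS hx
        · rintro ⟨hx, hxS⟩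
          rw [← hlt, List.mem_toFinset, hsplit] at hx
          rcases List.mem_append.mp hx with hx | hx
          · exact Or.inl hx
          · rcases List.mem_append.mp hx with hx | hx
            · exact absurd (by rw [← hwS, List.mem_toFinset]; exact hx) hxS
            · exact Or.inr hx
    · -- w-component ∈ permsOf S
      rw [hplen]
      exact mem_permsOf.mpr (perm_of_nodup_toFinset_eq hwnod S.nodup_toList
        (by rw [hwS, Finset.toList_toFinset]))
  -- hj : j maps into SigmaOrd
  · rintro ⟨m, u, w⟩ he
    rw [Finset.mem_product, Finset.mem_product] at he
    exact (fwd_facts N S hS hs he.1 he.2.1 he.2.2).1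
  -- j (i l) = l
  · intro l hl
    obtain ⟨k, hks, htw, hwS⟩ := sigmaOrd_structure hs hl
    obtain ⟨hperm, -⟩ := mem_sigmaOrd'.mp hl
    have hnod : l.Nodup := hperm.nodup_iff.mpr N.nodup_toList
    have hkl : k ≤ l.length := by omega
    have htkl : (l.take k).length = k := by rw [List.length_take, min_eq_left hkl]
    have hplen : (l.takeWhile fun x => decide (x ∉ S)).length = k := by rw [htw, htkl]
    set w := (l.drop k).take S.card with hwdef
    have hwlen : w.length = S.card := by
      rw [← hwS, List.toFinset_card_of_nodup
        (((List.take_sublist _ _).trans (List.drop_sublist _ _)).nodup hnod)]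
    have hsplit : l = l.take k ++ (w ++ l.drop (k + S.card)) := by
      conv_lhs => rw [← List.take_append_drop k l]
      congr 1
      conv_lhs => rw [← List.take_append_drop S.card (l.drop k)]
      rw [List.drop_drop]
    simp only [htw, htkl]
    rw [List.take_left' htkl, List.drop_left' htkl]
    conv_rhs => rw [hsplit]
    rw [← List.append_assoc]
  -- i (j e) = e
  · rintro ⟨m, u, w⟩ he
    rw [Finset.mem_product, Finset.mem_product] at he
    obtain ⟨hm, hu, hw⟩ := he
    obtain ⟨-, htw, hdw⟩ := fwd_facts N S hS hs hm hu hw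
    have hm' : m ≤ u.length := by
      rw [permsOf_length hu, Finset.card_sdiff_of_subset hS]
      exact Nat.lt_succ_iff.mp (Finset.mem_range.mp hm)
    have htl : (u.take m).length = m := by rw [List.length_take, min_eq_left hm']
    have hwl : w.length = S.card := permsOf_length hw
    have hassoc : u.take m ++ w ++ u.drop m = u.take m ++ (w ++ u.drop m) :=
      List.append_assoc _ _ _
    have hd1 : (u.take m ++ w ++ u.drop m).drop m = w ++ u.drop m := by
      rw [hassoc]; exact List.drop_left' htl
    have hd2 : (u.take m ++ w ++ u.drop m).drop (m + S.card) = u.drop m := by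
      apply List.drop_left'
      rw [List.length_append, htl, hwl]
    simp only [htw, htl]
    rw [hd2, List.take_append_drop, hd1, List.take_left' hwl]
  -- value compatibility
  · intro l hl
    obtain ⟨k, hks, htw, hwS⟩ := sigmaOrd_structure hs hl
    have hkl : k ≤ l.length := by omega
    have htkl : (l.take k).length = k := by rw [List.length_take, min_eq_left hkl]
    have hdw : l.dropWhile (fun x => decide (x ∉ S)) = l.drop k :=
      dropWhile_eq_of_takeWhile htw (List.take_append_drop k l).symm
    simp only [htw, htkl, hdw]
    rw [List.take_left' htkl]



lemma sum_Pi2 (S : Finset α) (f : Sym2 (Finset α) → ℝ) :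
    ∑ Q ∈ S.powerset.filter (fun Q => Q ≠ ∅ ∧ Q ≠ S), f s(Q, S \ Q)
      = 2 * ∑ π ∈ Pi2 S, f π := by
  rw [← Finset.sum_fiberwise_of_maps_to (g := fun Q => s(Q, S \ Q)) (t := Pi2 S)
      (fun Q hQ => Finset.mem_image.mpr ⟨Q, hQ, rfl⟩), Finset.mul_sum]
  refine Finset.sum_congr rfl fun π hπ => ?_
  obtain ⟨Q0, hQ0, rfl⟩ := Finset.mem_image.mp hπ
  rw [Finset.mem_filter, Finset.mem_powerset] at hQ0
  obtain ⟨hsub, hne, hnS⟩ := hQ0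
  have hsd : S \ (S \ Q0) = Q0 := Finset.sdiff_sdiff_eq_self hsub
  have hQne : Q0 ≠ S \ Q0 := by
    intro h
    obtain ⟨x, hx⟩ := Finset.nonempty_iff_ne_empty.mpr hne
    have hx' := hx
    rw [h] at hx'
    exact (Finset.mem_sdiff.mp hx').2 hx
  have hfib : (S.powerset.filter (fun Q => Q ≠ ∅ ∧ Q ≠ S)).filter
      (fun Q => s(Q, S \ Q) = s(Q0, S \ Q0)) = {Q0, S \ Q0} := by
    ext Q
    simp only [Finset.mem_filter, Finset.mem_powerset, Finset.mem_insert, Finset.mem_singleton]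
    constructor
    · rintro ⟨-, heq⟩
      rcases Sym2.eq_iff.mp heq with ⟨h1, -⟩ | ⟨h1, -⟩
      · exact Or.inl h1
      · exact Or.inr h1
    · rintro (rfl | rfl)
      · exact ⟨⟨hsub, hne, hnS⟩, rfl⟩
      · refine ⟨⟨Finset.sdiff_subset, ?_, ?_⟩, ?_⟩
        · intro h
          exact hnS (Finset.Subset.antisymm hsub (Finset.sdiff_eq_empty_iff_subset.mp h))
        · intro h
          exact hne (by simpa using (Finset.sdiff_eq_self_iff_disjoint.mp h).symm.eq_bot_of_le hsub)
        · rw [hsd]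
          exact Sym2.eq_swap
  rw [hfib, Finset.sum_insert (by simpa using hQne), Finset.sum_singleton, hsd, Sym2.eq_swap]
  ring

lemma sum_filter_powerset (S : Finset α) (h : Finset α → ℝ) :
    ∑ Q ∈ S.powerset.filter (fun Q => Q ≠ ∅ ∧ Q ≠ S), h Q
      = ∑ k ∈ Finset.Icc 1 (S.card - 1), ∑ Q ∈ Finset.powersetCard k S, h Q := by
  rw [← Finset.sum_biUnion (fun k _ k' _ hne => Finset.disjoint_left.mpr fun Q h1 h2 =>
    hne (by rw [← (Finset.mem_powersetCard.mp h1).2, ← (Finset.mem_powersetCard.mp h2).2]))]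
  apply Finset.sum_congr _ (fun _ _ => rfl)
  ext Q
  simp only [Finset.mem_biUnion, Finset.mem_Icc, Finset.mem_powersetCard, Finset.mem_filter,
    Finset.mem_powerset]
  constructor
  · rintro ⟨hQ, hne, hneS⟩
    refine ⟨Q.card, ⟨?_, ?_⟩, hQ, rfl⟩
    · rw [Nat.one_le_iff_ne_zero, Ne, Finset.card_eq_zero]
      exact hne
    · have : Q.card < S.card := Finset.card_lt_card (Finset.ssubset_iff_subset_ne.mpr ⟨hQ, hneS⟩)
      omega
  · rintro ⟨k, ⟨hk1, hk2⟩, hQ, rfl⟩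
    refine ⟨hQ, ?_, ?_⟩
    · intro h0
      rw [h0, Finset.card_empty] at hk1
      omega
    · intro h0
      rw [h0] at hk1 hk2
      omega

end AuxSO

set_option maxHeartbeats 1000000 in
theorem statement5 (N : Finset α) (v : Finset α → ℝ) (hv : SimpleGame N v)
    (S : Finset α) (hS : S ⊆ N) (hs : 2 ≤ S.card) :
    C_SO_ord N v S = C_SO N v S := by
  classical
  have hs1 : 1 ≤ S.card := by omega
  have hd : (N \ S).card = N.card - S.card := Finset.card_sdiff_of_subset hS
  have hsn : S.card ≤ N.card := Finset.card_le_card hS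
  have hseq : ∑ l ∈ SigmaOrd N S, seqAttitude v S l
      = ∑ m ∈ Finset.range (N.card - S.card + 1), ∑ u ∈ permsOf (N \ S), ∑ w ∈ permsOf S,
          (1 / ((S.card : ℝ) - 1)) * ∑ k ∈ Finset.Icc 1 (S.card - 1),
            BI v s((w.take k).toFinset, (w.drop k).toFinset) ((u.take m).toFinset) := by
    have h1 := sum_sigmaOrd N S hS hs1 (fun w T => (1 / ((S.card : ℝ) - 1)) *
      ∑ k ∈ Finset.Icc 1 (S.card - 1), BI v s((w.take k).toFinset, (w.drop k).toFinset) T)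
    rw [← h1]
    rfl
  have hcard : ((SigmaOrd N S).card : ℝ)
      = ((N.card - S.card + 1 : ℕ) : ℝ) * (((N \ S).card.factorial : ℕ) : ℝ)
          * ((S.card.factorial : ℕ) : ℝ) := by
    have h0 := sum_sigmaOrd N S hS hs1 (fun _ _ => (1 : ℝ))
    simp only [Finset.sum_const, nsmul_eq_mul, mul_one, Finset.card_range, card_permsOf] at h0
    rw [h0]
    push_cast
    ring
  have hG : ∀ T : Finset α, (∑ w ∈ permsOf S, (1 / ((S.card : ℝ) - 1)) *
        ∑ k ∈ Finset.Icc 1 (S.card - 1),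
          BI v s((w.take k).toFinset, (w.drop k).toFinset) T)
      = (1 / ((S.card : ℝ) - 1)) * ∑ k ∈ Finset.Icc 1 (S.card - 1),
          ∑ Q ∈ Finset.powersetCard k S,
            ((k.factorial : ℝ) * ((S.card - k).factorial : ℝ)) * BI v s(Q, S \ Q) T := by
    intro T
    rw [← Finset.mul_sum]
    congr 1
    rw [Finset.sum_comm]
    refine Finset.sum_congr rfl fun k hk => ?_
    rw [Finset.mem_Icc] at hk
    have hk2 : k ≤ S.card := by omega
    have hrepl : ∀ w ∈ permsOf S, BI v s((w.take k).toFinset, (w.drop k).toFinset) T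
        = BI v s((w.take k).toFinset, S \ (w.take k).toFinset) T := fun w hw => by
      rw [toFinset_take_drop (permsOf_nodup hw) k, permsOf_toFinset hw]
    rw [Finset.sum_congr rfl hrepl]
    exact sum_permsOf_take S k hk2 (fun Q => BI v s(Q, S \ Q) T)
  have hM : ∀ m ∈ Finset.range (N.card - S.card + 1),
      (∑ u ∈ permsOf (N \ S), ∑ w ∈ permsOf S,
        (1 / ((S.card : ℝ) - 1)) * ∑ k ∈ Finset.Icc 1 (S.card - 1),
          BI v s((w.take k).toFinset, (w.drop k).toFinset) ((u.take m).toFinset))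
      = ∑ T ∈ Finset.powersetCard m (N \ S),
          ((m.factorial : ℝ) * (((N \ S).card - m).factorial : ℝ)) *
            ((1 / ((S.card : ℝ) - 1)) * ∑ k ∈ Finset.Icc 1 (S.card - 1),
              ∑ Q ∈ Finset.powersetCard k S,
                ((k.factorial : ℝ) * ((S.card - k).factorial : ℝ)) * BI v s(Q, S \ Q) T) := by
    intro m hm
    have hm' : m ≤ (N \ S).card := by
      rw [hd]
      exact Nat.lt_succ_iff.mp (Finset.mem_range.mp hm)
    have h2 := sum_permsOf_take (N \ S) m hm' (fun T => ∑ w ∈ permsOf S,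
        (1 / ((S.card : ℝ) - 1)) * ∑ k ∈ Finset.Icc 1 (S.card - 1),
          BI v s((w.take k).toFinset, (w.drop k).toFinset) T)
    rw [h2]
    exact Finset.sum_congr rfl fun T _ => by rw [hG T]
  have hR : ∀ T : Finset α, (∑ π ∈ Pi2 S, soWeight S π * BI v π T)
      = (1 / 2) * ∑ k ∈ Finset.Icc 1 (S.card - 1), ∑ Q ∈ Finset.powersetCard k S,
          soWeight S s(Q, S \ Q) * BI v s(Q, S \ Q) T := by
    intro T
    have h3 := sum_Pi2 S (fun π => soWeight S π * BI v π T)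
    rw [sum_filter_powerset S (fun Q => soWeight S s(Q, S \ Q) * BI v s(Q, S \ Q) T)] at h3
    linarith
  have hσ0 : ((S.card : ℝ) - 1) ≠ 0 := by
    have h2 : (2 : ℝ) ≤ (S.card : ℝ) := by exact_mod_cast hs
    intro h
    linarith
  have hsf0 : ((S.card.factorial : ℕ) : ℝ) ≠ 0 :=
    Nat.cast_ne_zero.mpr (Nat.factorial_ne_zero _)
  unfold C_SO_ord C_SO
  rw [hseq, Finset.sum_congr rfl hM, hcard, Finset.sum_powerset, hd, Finset.mul_sum]
  refine Finset.sum_congr rfl fun m hm => ?_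
  rw [Finset.mul_sum]
  refine Finset.sum_congr rfl fun T hT => ?_
  obtain ⟨hTsub, hTcard⟩ := Finset.mem_powersetCard.mp hT
  rw [hR T]
  have hin : (∑ k ∈ Finset.Icc 1 (S.card - 1), ∑ Q ∈ Finset.powersetCard k S,
        soWeight S s(Q, S \ Q) * BI v s(Q, S \ Q) T)
      = (2 / (((S.card : ℝ) - 1) * ((S.card.factorial : ℕ) : ℝ))) *
          ∑ k ∈ Finset.Icc 1 (S.card - 1), ∑ Q ∈ Finset.powersetCard k S,
            ((k.factorial : ℝ) * ((S.card - k).factorial : ℝ)) * BI v s(Q, S \ Q) T := by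
    rw [Finset.mul_sum]
    refine Finset.sum_congr rfl fun k hk => ?_
    rw [Finset.mul_sum]
    refine Finset.sum_congr rfl fun Q hQ => ?_
    obtain ⟨hQs, hQc⟩ := Finset.mem_powersetCard.mp hQ
    have hQd : (S \ Q).card = S.card - k := by rw [Finset.card_sdiff_of_subset hQs, hQc]
    simp only [soWeight, Sym2.lift_mk]
    rw [hQc, hQd]
    push_cast
    ring
  rw [hin]
  unfold soExt
  rw [hTcard, ← hd]
  have hfac : (((N \ S).card + 1).factorial : ℝ)
      = (((N \ S).card + 1 : ℕ) : ℝ) * (((N \ S).card.factorial : ℕ) : ℝ) := by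
    rw [Nat.factorial_succ]
    push_cast
    ring
  have hne1 : (((N \ S).card + 1 : ℕ) : ℝ) ≠ 0 := by positivity
  have hne2 : (((N \ S).card.factorial : ℕ) : ℝ) ≠ 0 :=
    Nat.cast_ne_zero.mpr (Nat.factorial_ne_zero _)
  rw [hfac]
  push_cast
  field_simp
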